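/- arXiv:1206.5167 — 2 statements merged into one kernel-verified Lean document; each statement's English description precedes it below -/
import Mathlib

section
/- Let V ⊆ ℝ^n be a regular space with capacity c, f a feasible flow, P a shortest augmenting r-path for f, and g the feasible flow obtained from f by maximal augmentation along P. If Q is a shortest augmenting r-path for g, then |Q| > |P| if and only if Q is not a shortest augmenting path for f. -/
open Finset

variable {n : ℕ}

/-- The support of a vector. -/
def supp (x : Fin n → ℝ) : Set (Fin n) := {j | x j ≠ 0}

/-- A nonzero vector of `V` is elementary if no nonzero vector of `V` has support
properly contained in its support. -/
def IsElementary (V : Submodule ℝ (Fin n → ℝ)) (x : Fin n → ℝ) : Prop :=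
  x ∈ V ∧ x ≠ 0 ∧ ∀ y ∈ V, y ≠ 0 → ¬ (supp y ⊂ supp x)

/-- A primitive vector: elementary with entries in `{-1, 0, 1}`. -/
def IsPrimitive (V : Submodule ℝ (Fin n → ℝ)) (x : Fin n → ℝ) : Prop :=
  IsElementary V x ∧ ∀ j, x j ∈ ({-1, 0, 1} : Set ℝ)

/-- `y` conforms to `x`. -/
def Conforms (y x : Fin n → ℝ) : Prop := ∀ j, y j ≠ 0 → y j * x j > 0

/-- A regular space: the kernel of a totally unimodular matrix. -/
def IsRegularSpace (V : Submodule ℝ (Fin n → ℝ)) : Prop :=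
  ∃ (m : ℕ) (A : Matrix (Fin m) (Fin n) ℝ),
    A.IsTotallyUnimodular ∧ V = LinearMap.ker A.mulVecLin

/-- An `r`-path: a primitive vector with value `+1` at `r`. -/
def IsRPath (V : Submodule ℝ (Fin n → ℝ)) (r : Fin n) (P : Fin n → ℝ) : Prop :=
  IsPrimitive V P ∧ P r = 1

/-- Feasibility with respect to capacity `c` (no constraint at `r`). -/
def Feasible (c : Fin n → ℝ) (r : Fin n) (f : Fin n → ℝ) : Prop :=
  ∀ j, j ≠ r → 0 ≤ f j ∧ f j ≤ c j

/-- An `r`-path `P` is augmenting for the flow `f`. -/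
def Augmenting (V : Submodule ℝ (Fin n → ℝ)) (c : Fin n → ℝ) (r : Fin n)
    (f P : Fin n → ℝ) : Prop :=
  IsRPath V r P ∧ ∃ ε : ℝ, 0 < ε ∧ Feasible c r (f + ε • P)

/-- The 1-norm. -/
def onorm (x : Fin n → ℝ) : ℝ := ∑ j, |x j|

/-- A shortest augmenting `r`-path. -/
def ShortestAug (V : Submodule ℝ (Fin n → ℝ)) (c : Fin n → ℝ) (r : Fin n)
    (f P : Fin n → ℝ) : Prop :=
  Augmenting V c r f P ∧ ∀ Q, Augmenting V c r f Q → onorm P ≤ onorm Q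

/-- `g` is obtained from `f` by maximal augmentation along `P`. -/
def MaxAug (c : Fin n → ℝ) (r : Fin n) (f P g : Fin n → ℝ) : Prop :=
  ∃ ε : ℝ, 0 < ε ∧ g = f + ε • P ∧ Feasible c r g ∧
    ∀ ε' : ℝ, ε < ε' → ¬ Feasible c r (f + ε' • P)

/-- A conformal primitive decomposition of `P + Q` in which `M` and `J` are the two
`r`-path summands (`M` playing the role of `P ∧ Q` and `J` of `P ∨ Q`). -/
def MeetJoinDecomp (V : Submodule ℝ (Fin n → ℝ)) (r : Fin n)
    (P Q M J : Fin n → ℝ) : Prop :=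
  ∃ (k : ℕ) (p : Fin k → Fin n → ℝ) (a b : Fin k),
    (∀ i, IsPrimitive V (p i)) ∧ (∀ i, Conforms (p i) (P + Q)) ∧
    (∑ i, p i) = P + Q ∧ a ≠ b ∧ p a = M ∧ p b = J ∧
    p a r = 1 ∧ p b r = 1 ∧ ∀ i, p i r = 1 → i = a ∨ i = b

lemma sign_mul_trans {a b c : ℝ} (h1 : a * b > 0) (h2 : b * c > 0) : a * c > 0 := by
  have hb : b ≠ 0 := by rintro rfl; simp at h1
  have hb2 : 0 < b * b := mul_self_pos.mpr hb
  nlinarith [mul_pos h1 h2]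

lemma conforms_trans {y z x : Fin n → ℝ} (h1 : Conforms y z) (h2 : Conforms z x) :
    Conforms y x := by
  intro j hj
  have hz := h1 j hj
  have hzj : z j ≠ 0 := by rintro h; rw [h] at hz; simp at hz
  exact sign_mul_trans hz (h2 j hzj)

lemma conforms_supp_subset {y x : Fin n → ℝ} (h : Conforms y x) : supp y ⊆ supp x := by
  intro j hj
  have := h j hj
  intro hx
  rw [hx] at this; simp at this

lemma ratio_pos {a b : ℝ} (h : a * b > 0) : 0 < b / a := by
  rcases mul_pos_iff.mp h with ⟨ha, hb⟩ | ⟨ha, hb⟩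
  · exact div_pos hb ha
  · exact div_pos_iff.mpr (Or.inr ⟨hb, ha⟩)

lemma exists_elementary_conformal (V : Submodule ℝ (Fin n → ℝ)) (x : Fin n → ℝ)
    (hxV : x ∈ V) (hx0 : x ≠ 0) :
    ∃ y, y ∈ V ∧ IsElementary V y ∧ Conforms y x := by
  classical
  set card : (Fin n → ℝ) → ℕ := fun y => (Finset.univ.filter (fun j => y j ≠ 0)).card with hcard
  set Cand : Set (Fin n → ℝ) := {y | y ∈ V ∧ y ≠ 0 ∧ Conforms y x} with hCand
  have hxC : x ∈ Cand := ⟨hxV, hx0, fun j hj => mul_pos_iff.mpr (by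
    rcases lt_trichotomy (x j) 0 with h | h | h
    · exact Or.inr ⟨h, h⟩
    · exact absurd h hj
    · exact Or.inl ⟨h, h⟩)⟩
  set K : Set ℕ := card '' Cand with hK
  have hKne : K.Nonempty := ⟨card x, ⟨x, hxC, rfl⟩⟩
  obtain ⟨y, hyC, hyc⟩ : ∃ y ∈ Cand, card y = sInf K := Nat.sInf_mem hKne
  obtain ⟨hyV, hy0, hyx⟩ := hyC
  refine ⟨y, hyV, ⟨hyV, hy0, ?_⟩, hyx⟩
  intro w hwV hw0 hss
  -- supp w ⊂ supp y
  obtain ⟨hsub, hne⟩ := ssubset_iff_subset_ne.mp hss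
  have hnsub : ¬ (supp y ⊆ supp w) := fun h => hne (Set.Subset.antisymm hsub h)
  obtain ⟨j1, hj1y, hj1w⟩ := Set.not_subset.mp hnsub
  have hyj1 : y j1 ≠ 0 := hj1y
  have hwj1 : w j1 = 0 := not_not.mp hj1w
  obtain ⟨j2, hwj2⟩ : ∃ j2, w j2 ≠ 0 := Function.ne_iff.mp hw0
  have hyj2 : y j2 ≠ 0 := hsub hwj2
  set w' : Fin n → ℝ := if w j2 * y j2 > 0 then w else -w with hw'
  have hw'V : w' ∈ V := by
    rw [hw']; split
    · exact hwV
    · exact V.neg_mem hwV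
  have hw'supp : ∀ j, w' j ≠ 0 ↔ w j ≠ 0 := by
    intro j; rw [hw']; split <;> simp
  have hw'j2 : w' j2 * y j2 > 0 := by
    rw [hw']; split
    · assumption
    · rename_i h
      have : w j2 * y j2 ≠ 0 := mul_ne_zero hwj2 hyj2
      have hlt : w j2 * y j2 < 0 := lt_of_le_of_ne (not_lt.mp h) this
      simp only [Pi.neg_apply]
      nlinarith
  set T : Finset (Fin n) := Finset.univ.filter (fun j => w' j * y j > 0) with hT
  have hTne : T.Nonempty := ⟨j2, by simp [hT, hw'j2]⟩
  set t : ℝ := T.inf' hTne (fun j => y j / w' j) with ht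
  have htpos : 0 < t := by
    rw [ht]
    apply Finset.lt_inf'_iff hTne |>.mpr
    intro j hj
    exact ratio_pos (by simpa [hT] using hj)
  set y' : Fin n → ℝ := y - t • w' with hy'
  have hy'V : y' ∈ V := V.sub_mem hyV (V.smul_mem t hw'V)
  have hy'y : Conforms y' y := by
    intro j hj
    have hyj : y j ≠ 0 := by
      intro h
      apply hj
      have hwj : w' j = 0 := by
        by_contra hw
        exact (hsub ((hw'supp j).mp hw)) h
      simp [hy', h, hwj]
    by_cases hwj : w' j = 0
    · have : y' j = y j := by simp [hy', hwj]
      rw [this]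
      exact mul_pos_iff.mpr (by rcases lt_trichotomy (y j) 0 with h|h|h
                                exacts [Or.inr ⟨h,h⟩, absurd h hyj, Or.inl ⟨h,h⟩])
    · by_cases hjT : w' j * y j > 0
      · have hle : t ≤ y j / w' j := Finset.inf'_le _ (by simp [hT, hjT])
        have hy'j : y' j = y j - t * w' j := by simp [hy']
        rcases mul_pos_iff.mp hjT with ⟨hw1, hy1⟩ | ⟨hw1, hy1⟩
        · have : t * w' j ≤ y j := by
            rw [div_eq_mul_inv] at hle
            calc t * w' j ≤ (y j * (w' j)⁻¹) * w' j := by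
                  apply mul_le_mul_of_nonneg_right hle (le_of_lt hw1)
              _ = y j := by field_simp
          have h0 : 0 ≤ y' j := by rw [hy'j]; linarith
          have : y' j ≠ 0 := hj
          have : 0 < y' j := lt_of_le_of_ne h0 (Ne.symm this)
          exact mul_pos this hy1
        · have : y j ≤ t * w' j := by
            rw [div_eq_mul_inv] at hle
            have := mul_le_mul_of_nonpos_right hle (le_of_lt hw1)
            calc y j = (y j * (w' j)⁻¹) * w' j := by field_simp
              _ ≤ t * w' j := this
          have h0 : y' j ≤ 0 := by rw [hy'j]; linarith
          have : 0 > y' j := lt_of_le_of_ne h0 hj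
          exact mul_pos_of_neg_of_neg this hy1
      · have hjT' : w' j * y j < 0 :=
          lt_of_le_of_ne (not_lt.mp hjT) (mul_ne_zero hwj hyj)
        have hy'j : y' j = y j - t * w' j := by simp [hy']
        rw [hy'j]
        nlinarith [mul_self_pos.mpr hyj, mul_pos htpos (neg_pos.mpr hjT')]
  have hy'0 : y' ≠ 0 := by
    intro h
    have hwj1' : w' j1 = 0 := by
      by_contra hw
      exact ((hw'supp j1).mp hw) hwj1
    have := congrFun h j1
    simp [hy', hwj1'] at this
    exact hyj1 this
  have hy'C : y' ∈ Cand := ⟨hy'V, hy'0, conforms_trans hy'y hyx⟩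
  have hge : sInf K ≤ card y' := Nat.sInf_le ⟨y', hy'C, rfl⟩
  obtain ⟨js, hjsT, hjseq⟩ := Finset.exists_mem_eq_inf' hTne (fun j => y j / w' j)
  have hjsT' : w' js * y js > 0 := by simpa [hT] using hjsT
  have hwjs : w' js ≠ 0 := fun h => by rw [h] at hjsT'; simp at hjsT'
  have hy'js : y' js = 0 := by
    have : y' js = y js - t * w' js := by simp [hy']
    rw [this, ht, hjseq]
    field_simp
    ring
  have hyjs : y js ≠ 0 := fun h => by rw [h] at hjsT'; simp at hjsT'
  have hlt : card y' < card y := by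
    have hsubF : (Finset.univ.filter (fun j => y' j ≠ 0)) ⊆
        (Finset.univ.filter (fun j => y j ≠ 0)) := by
      intro j hj
      simp only [Finset.mem_filter, Finset.mem_univ, true_and] at hj ⊢
      exact conforms_supp_subset hy'y hj
    exact Finset.card_lt_card ((Finset.ssubset_iff_of_subset hsubF).mpr
      ⟨js, by simp [hyjs], by simp [hy'js]⟩)
  omega


lemma elementary_supp_mult {V : Submodule ℝ (Fin n → ℝ)} {y v : Fin n → ℝ}
    (hy : IsElementary V y) (hv : v ∈ V) (hs : supp v ⊆ supp y) : ∃ t : ℝ, v = t • y := by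
  by_cases h0 : v = 0
  · exact ⟨0, by simp [h0]⟩
  obtain ⟨j1, hj1⟩ := Function.ne_iff.mp h0
  have hyj1 : y j1 ≠ 0 := hs hj1
  refine ⟨v j1 / y j1, ?_⟩
  set t : ℝ := v j1 / y j1 with htdef
  set w : Fin n → ℝ := v - t • y with hw
  have hwV : w ∈ V := V.sub_mem hv (V.smul_mem t hy.1)
  have hwj1 : w j1 = 0 := by
    simp only [hw, Pi.sub_apply, Pi.smul_apply, smul_eq_mul, htdef]
    field_simp
    ring
  have hwsub : supp w ⊆ supp y := by
    intro j hj
    by_contra hyj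
    have hyj' : y j = 0 := not_not.mp hyj
    have hvj : v j = 0 := by
      by_contra hv'
      exact (hs hv') hyj'
    apply hj
    simp [hw, hyj', hvj]
  have hwss : supp w ⊂ supp y :=
    HasSubset.Subset.ssubset_of_ne hwsub (fun h => (h ▸ hs hj1 : j1 ∈ supp w) hwj1)
  have hw0 : w = 0 := by
    by_contra hw0
    exact hy.2.2 w hwV hw0 hwss
  have := sub_eq_zero.mp hw0
  exact this

lemma sign_range_iff {a : ℝ} :
    a ∈ Set.range (SignType.cast : SignType → ℝ) ↔ a = -1 ∨ a = 0 ∨ a = 1 := by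
  constructor
  · rintro ⟨sg, rfl⟩; cases sg <;> simp
  · rintro (rfl | rfl | rfl)
    exacts [⟨.neg, by simp⟩, ⟨.zero, by simp⟩, ⟨.pos, by simp⟩]

lemma exists_primitive_of_elementary (V : Submodule ℝ (Fin n → ℝ)) (hV : IsRegularSpace V)
    (y : Fin n → ℝ) (hy : IsElementary V y) :
    ∃ p, IsPrimitive V p ∧ Conforms p y := by
  classical
  obtain ⟨m, A, hATU, hker⟩ := hV
  set S : Finset (Fin n) := Finset.univ.filter (fun j => y j ≠ 0) with hS
  have hSne : S.Nonempty := by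
    obtain ⟨j, hj⟩ := Function.ne_iff.mp hy.2.1
    refine ⟨j, ?_⟩
    simp only [hS, Finset.mem_filter, Finset.mem_univ, true_and]
    simpa using hj
  set iso := S.orderIsoOfFin rfl with hiso
  set g : Fin S.card → Fin n := fun i => (iso i : Fin n) with hg
  have hginj : Function.Injective g := fun i i' h =>
    iso.injective (Subtype.ext h)
  have hgS : ∀ i, g i ∈ S := fun i => (iso i).2
  have himage : Finset.image g Finset.univ = S := by
    apply Finset.eq_of_subset_of_card_le
    · intro j hj
      obtain ⟨i, _, rfl⟩ := Finset.mem_image.mp hj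
      exact hgS i
    · rw [Finset.card_image_of_injective _ hginj, Finset.card_univ, Fintype.card_fin]
  have hsum_ext : ∀ φ : Fin n → ℝ, (∀ j, j ∉ S → φ j = 0) → ∑ j, φ j = ∑ i, φ (g i) := by
    intro φ hφ
    have h1 : ∑ i, φ (g i) = ∑ j ∈ Finset.image g Finset.univ, φ j :=
      (Finset.sum_image (fun a _ b _ h => hginj h)).symm
    rw [h1, himage]
    exact (Finset.sum_subset (Finset.subset_univ S) (fun j _ hj => hφ j hj)).symm
  obtain ⟨j0, hj0S⟩ := hSne
  have hyj0 : y j0 ≠ 0 := by simpa [hS] using hj0S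
  obtain ⟨i0g, hi0g⟩ : ∃ i, g i = j0 := by
    have := himage ▸ hj0S
    obtain ⟨i, _, hi⟩ := Finset.mem_image.mp this
    exact ⟨i, hi⟩
  have hyA : A.mulVec y = 0 := by
    have : y ∈ LinearMap.ker A.mulVecLin := hker ▸ hy.1
    simpa using this
  have hyS : ∀ j, j ∉ S → y j = 0 := fun j hj => not_not.mp (by simpa [hS] using hj)
  have hsum : ∀ q : Fin m, ∑ i, A q (g i) * y (g i) = 0 := by
    intro q
    rw [← hsum_ext (fun j => A q j * y j)
      (fun j hj => by show A q j * y j = 0; rw [hyS j hj, mul_zero])]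
    have := congrFun hyA q
    simpa [Matrix.mulVec, dotProduct] using this
  set u : Fin S.card → ℝ := fun i => if j0 = g i then 1 else 0 with hu
  have hudot : ∀ v : Fin S.card → ℝ, ∑ i, u i * v i = v i0g := by
    intro v
    rw [show (∑ i, u i * v i) = ∑ i, (if i0g = i then v i else 0) from
      Finset.sum_congr rfl (fun i _ => by
        by_cases h : i0g = i
        · subst h; simp [hu, hi0g]
        · have : j0 ≠ g i := fun hc => h (hginj (hi0g.trans hc))
          simp [hu, this, h])]
    simp
  set Arow : Fin m → (Fin S.card → ℝ) := fun q => fun i => A q (g i) with hArow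
  set rowvecs : Set (Fin S.card → ℝ) := Set.range Arow ∪ {u} with hrv
  -- extension of vectors on S by zero
  have hext : ∀ v : Fin S.card → ℝ, (∀ q : Fin m, ∑ i, A q (g i) * v i = 0) →
      ∃ t : ℝ, ∀ i, v i = t * y (g i) := by
    intro v hv
    set vt : Fin n → ℝ := fun j => if h : j ∈ S then v (iso.symm ⟨j, h⟩) else 0 with hvt
    have hvtg : ∀ i, vt (g i) = v i := by
      intro i
      have h1 : g i ∈ S := hgS i
      have h2 : iso.symm ⟨g i, h1⟩ = i := by
        rw [show (⟨g i, h1⟩ : {x // x ∈ S}) = iso i from Subtype.ext rfl]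
        exact iso.symm_apply_apply i
      simp only [hvt, dif_pos h1, h2]
    have hvtS : ∀ j, j ∉ S → vt j = 0 := fun j hj => by simp [hvt, hj]
    have hvtV : vt ∈ V := by
      rw [hker]
      simp only [LinearMap.mem_ker, Matrix.mulVecLin_apply]
      ext q
      have := hsum_ext (fun j => A q j * vt j)
        (fun j hj => by show A q j * vt j = 0; rw [hvtS j hj, mul_zero])
      simp only [Matrix.mulVec, dotProduct, Pi.zero_apply]
      rw [this]
      simp only [hvtg]
      exact hv q
    have hsupp : supp vt ⊆ supp y := by
      intro j hj
      by_contra hyj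
      have hyj' : y j = 0 := not_not.mp hyj
      have hjS : j ∉ S := by
        simp only [hS, Finset.mem_filter, Finset.mem_univ, true_and, not_not]
        simpa using hyj'
      exact hj (hvtS j hjS)
    obtain ⟨t, ht⟩ := elementary_supp_mult hy hvtV hsupp
    exact ⟨t, fun i => by rw [← hvtg i, ht]; simp⟩
  -- the matrix with rows `Arow` and `u` has full column rank
  set D : Matrix (Fin m ⊕ Fin 1) (Fin S.card) ℝ := Matrix.of (Sum.elim Arow (fun _ => u)) with hD
  have hDker : LinearMap.ker D.mulVecLin = ⊥ := by
    rw [LinearMap.ker_eq_bot']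
    intro v hv
    have hvq : ∀ q : Fin m, ∑ i, A q (g i) * v i = 0 := by
      intro q
      have := congrFun (show D.mulVec v = 0 by simpa using hv) (Sum.inl q)
      simpa [hD, Matrix.mulVec, dotProduct, hArow] using this
    have hvu : v i0g = 0 := by
      have := congrFun (show D.mulVec v = 0 by simpa using hv) (Sum.inr 0)
      rw [← hudot v]
      simpa [hD, Matrix.mulVec, dotProduct] using this
    obtain ⟨t, ht⟩ := hext v hvq
    have ht0 : t = 0 := by
      have := ht i0g
      rw [hvu, hi0g] at this
      exact (mul_eq_zero.mp this.symm).resolve_right hyj0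
    funext i
    simp [ht i, ht0]
  have hDrange : Set.range (Matrix.of (Sum.elim Arow (fun _ : Fin 1 => u)) :
      Matrix (Fin m ⊕ Fin 1) (Fin S.card) ℝ) = rowvecs := by
    show Set.range (Sum.elim Arow (fun _ : Fin 1 => u)) = rowvecs
    rw [Set.Sum.elim_range, hrv]
    congr 1
    exact Set.range_const
  have hspan : Submodule.span ℝ rowvecs = ⊤ := by
    have hinj : Function.Injective D.mulVecLin := LinearMap.ker_eq_bot.mp hDker
    have hrank : D.rank = S.card := by
      rw [Matrix.rank, LinearMap.finrank_range_of_inj hinj]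
      simp [Module.finrank_pi]
    have h1 : D.transpose.rank = S.card := by rw [Matrix.rank_transpose]; exact hrank
    rw [Matrix.rank_eq_finrank_span_cols, Matrix.col_transpose] at h1
    have h2 : (Set.range D.row) = rowvecs := hDrange
    rw [h2] at h1
    apply Submodule.eq_top_of_finrank_eq
    rw [h1]
    simp [Module.finrank_pi]
  obtain ⟨bset, hbsub, hbspan, hbli⟩ := exists_linearIndependent ℝ rowvecs
  rw [hspan] at hbspan
  have hbfin : bset.Finite :=
    ((Set.finite_range Arow).union (Set.finite_singleton u)).subset (by rw [← hrv]; exact hbsub)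
  haveI : Fintype bset := hbfin.fintype
  have hbtop : ⊤ ≤ Submodule.span ℝ (Set.range ((↑) : bset → (Fin S.card → ℝ))) := by
    rw [Subtype.range_coe, hbspan]
  set bas : Module.Basis bset ℝ (Fin S.card → ℝ) := Module.Basis.mk hbli hbtop with hbas
  have hcardb : Fintype.card bset = S.card := by
    have h1 := Module.finrank_eq_card_basis bas
    rw [show Module.finrank ℝ (Fin S.card → ℝ) = S.card by simp [Module.finrank_pi]] at h1
    exact h1.symm
  set e : Fin S.card ≃ bset := (Fintype.equivFinOfCardEq hcardb).symm with he
  set C : Matrix (Fin S.card) (Fin S.card) ℝ := Matrix.of (fun i => (e i : Fin S.card → ℝ)) with hC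
  have hCli : LinearIndependent ℝ (fun i => C i) := hbli.comp e e.injective
  have hCunit : IsUnit C := Matrix.linearIndependent_rows_iff_isUnit.mp hCli
  have hCdet : IsUnit C.det := (Matrix.isUnit_iff_isUnit_det C).mp hCunit
  have hCinj : Function.Injective (fun i => C i) := fun i i' h => e.injective (Subtype.ext h)
  have hCmem : ∀ i, C i ∈ rowvecs := fun i => hbsub (e i).2
  -- the vector y restricted to S, normalized
  set wv : Fin S.card → ℝ := fun i => y (g i) / y j0 with hwv
  have hTU2 : (Matrix.fromRows A (1 : Matrix (Fin n) (Fin n) ℝ)).IsTotallyUnimodular :=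
    (Matrix.fromRows_one_isTotallyUnimodular_iff A).mpr hATU
  -- an index whose row is `u`
  have hex : ∃ i, C i = u := by
    by_contra hex
    push_neg at hex
    have hC0 : C.mulVec (fun i => y (g i)) = 0 := by
      ext q
      rcases hCmem q with ⟨qq, hqq⟩ | hqu
      · show ∑ i, C q i * y (g i) = 0
        rw [show (C q : Fin S.card → ℝ) = Arow qq from hqq.symm]
        exact hsum qq
      · exact absurd hqu (hex q)
    have := Matrix.mulVec_injective_iff_isUnit.mpr hCunit
      (by rw [hC0, Matrix.mulVec_zero] : C.mulVec (fun i => y (g i)) = C.mulVec 0)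
    have := congrFun this i0g
    rw [hi0g] at this
    exact hyj0 this
  obtain ⟨i0, hi0⟩ := hex
  -- row selection function
  set F : Fin S.card → (Fin m ⊕ Fin n) := fun i =>
    if h : ∃ q, Arow q = C i then Sum.inl h.choose else Sum.inr j0 with hF
  have hFrow : ∀ i, (fun i' => (Matrix.fromRows A (1 : Matrix (Fin n) (Fin n) ℝ)) (F i) (g i'))
      = C i := by
    intro i
    rw [hF]
    dsimp only
    split
    · rename_i h
      have hs := h.choose_spec
      funext i'
      rw [Matrix.fromRows_apply_inl]
      exact congrFun hs i'
    · rename_i h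
      have hCu : C i = u := by
        rcases hCmem i with ⟨q, hq⟩ | hq
        · exact absurd ⟨q, hq⟩ h
        · exact hq
      funext i'
      rw [Matrix.fromRows_apply_inr, hCu]
      simp [Matrix.one_apply, hu]
  have hCsub : C = (Matrix.fromRows A (1 : Matrix (Fin n) (Fin n) ℝ)).submatrix F g := by
    ext q i'
    rw [Matrix.submatrix_apply]
    exact (congrFun (hFrow q) i').symm
  have hdetC : C.det = 1 ∨ C.det = -1 := by
    have h5 := (Matrix.isTotallyUnimodular_iff _).mp hTU2 S.card F g
    rw [← hCsub] at h5
    rcases sign_range_iff.mp h5 with h | h | h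
    · exact Or.inr h
    · exact absurd h (by simpa using hCdet.ne_zero)
    · exact Or.inl h
  -- Cramer computation
  have hCw : C.mulVec wv = Pi.single i0 1 := by
    ext q
    by_cases hq : q = i0
    · subst hq
      show ∑ i, C q i * wv i = _
      rw [show (C q : Fin S.card → ℝ) = u from hi0, hudot wv, Pi.single_eq_same, hwv]
      dsimp only
      rw [hi0g, div_self hyj0]
    · have hCqu : C q ≠ u := fun h => hq (hCinj (h.trans hi0.symm))
      rcases hCmem q with ⟨qq, hqq⟩ | hqu
      · show ∑ i, C q i * wv i = _
        rw [show (C q : Fin S.card → ℝ) = Arow qq from hqq.symm,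
          Pi.single_eq_of_ne hq]
        have : ∑ i, Arow qq i * wv i = (∑ i, A qq (g i) * y (g i)) / y j0 := by
          rw [Finset.sum_div]
          exact Finset.sum_congr rfl (fun i _ => by rw [hArow, hwv]; ring)
        rw [this, hsum qq, zero_div]
      · exact absurd hqu hCqu
  have hw_eq : wv = C⁻¹.mulVec (Pi.single i0 1) := by
    rw [← hCw, Matrix.mulVec_mulVec, Matrix.nonsing_inv_mul C hCdet, Matrix.one_mulVec]
  have hentry : ∀ i, wv i = -1 ∨ wv i = 0 ∨ wv i = 1 := by
    intro i
    have h1 : wv i = C⁻¹ i i0 := by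
      rw [hw_eq]
      simp [Matrix.mulVec_single]
    have h2 : C⁻¹ i i0 = Ring.inverse C.det * C.adjugate i i0 := by
      rw [Matrix.inv_def]
      simp
    have h3 : C.adjugate i i0 = (C.updateRow i0 (Pi.single i 1)).det :=
      Matrix.adjugate_apply _ _ _
    have h4 : C.updateRow i0 (Pi.single i 1) =
        (Matrix.fromRows A (1 : Matrix (Fin n) (Fin n) ℝ)).submatrix
          (Function.update F i0 (Sum.inr (g i))) g := by
      ext q i'
      rw [Matrix.updateRow_apply, Matrix.submatrix_apply, Function.update_apply]
      by_cases hq : q = i0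
      · rw [if_pos hq, if_pos hq, Matrix.fromRows_apply_inr]
        rw [Matrix.one_apply, Pi.single_apply]
        by_cases h : i = i'
        · subst h; simp
        · rw [if_neg (fun hc => h (hginj hc)), if_neg (Ne.symm h)]
      · rw [if_neg hq, if_neg hq]
        exact (congrFun (hFrow q) i').symm
    have h5 := (Matrix.isTotallyUnimodular_iff _).mp hTU2 S.card
      (Function.update F i0 (Sum.inr (g i))) g
    rw [← h4] at h5
    rw [h1, h2, h3]
    rcases sign_range_iff.mp h5 with h | h | h <;> rcases hdetC with hd | hd <;>
      rw [h, hd] <;> norm_num [Ring.inverse_eq_inv]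
  -- now define the primitive vector
  have hwvp : ∀ i, wv i = ((y j0)⁻¹ • y) (g i) := fun i => by
    rw [hwv]; simp [div_eq_inv_mul]
  have hentry' : ∀ j, ((y j0)⁻¹ • y) j = -1 ∨ ((y j0)⁻¹ • y) j = 0 ∨ ((y j0)⁻¹ • y) j = 1 := by
    intro j
    by_cases hjS : j ∈ S
    · obtain ⟨i, _, rfl⟩ := Finset.mem_image.mp (himage ▸ hjS)
      rw [← hwvp i]
      exact hentry i
    · right; left
      rw [Pi.smul_apply, hyS j hjS, smul_zero]
  -- supp of a nonzero multiple
  have hsuppmul : ∀ (β : ℝ), β ≠ 0 → supp (β • y) = supp y := by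
    intro β hβ
    ext j
    simp only [supp, Set.mem_setOf_eq, Pi.smul_apply, smul_eq_mul]
    constructor
    · intro h hc; exact h (by rw [hc, mul_zero])
    · exact fun h => mul_ne_zero hβ h
  have helem : ∀ (β : ℝ), β ≠ 0 → IsElementary V (β • y) := by
    intro β hβ
    refine ⟨V.smul_mem β hy.1, ?_, ?_⟩
    · intro h
      apply hy.2.1
      funext j
      have := congrFun h j
      simp only [Pi.smul_apply, smul_eq_mul, Pi.zero_apply] at this ⊢
      exact (mul_eq_zero.mp this).resolve_left hβ
    · intro w hwV hw0 hss
      rw [hsuppmul β hβ] at hss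
      exact hy.2.2 w hwV hw0 hss
  by_cases hsign : 0 < y j0
  · refine ⟨(y j0)⁻¹ • y, ⟨helem _ (inv_ne_zero hyj0), ?_⟩, ?_⟩
    · intro j
      rcases hentry' j with h | h | h <;> rw [h] <;> simp
    · intro j hj
      have : ((y j0)⁻¹ • y) j * y j = (y j0)⁻¹ * (y j * y j) := by
        simp only [Pi.smul_apply, smul_eq_mul]; ring
      rw [this]
      apply mul_pos (inv_pos.mpr hsign)
      have hyj : y j ≠ 0 := by
        intro hc
        exact hj (by simp [Pi.smul_apply, hc])
      exact mul_self_pos.mpr hyj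
  · have hneg : y j0 < 0 := lt_of_le_of_ne (not_lt.mp hsign) hyj0
    refine ⟨(-(y j0))⁻¹ • y, ⟨helem _ (inv_ne_zero (neg_ne_zero.mpr hyj0)), ?_⟩, ?_⟩
    · intro j
      have : ((-(y j0))⁻¹ • y) j = -(((y j0)⁻¹ • y) j) := by
        simp only [Pi.smul_apply, smul_eq_mul]
        rw [inv_neg]
        ring
      rw [this]
      rcases hentry' j with h | h | h <;> rw [h] <;> simp
    · intro j hj
      have : ((-(y j0))⁻¹ • y) j * y j = (-(y j0))⁻¹ * (y j * y j) := by
        simp only [Pi.smul_apply, smul_eq_mul]; ring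
      rw [this]
      apply mul_pos (inv_pos.mpr (by linarith))
      have hyj : y j ≠ 0 := by
        intro hc
        exact hj (by simp [Pi.smul_apply, hc])
      exact mul_self_pos.mpr hyj

lemma exists_primitive_conformal (V : Submodule ℝ (Fin n → ℝ)) (hV : IsRegularSpace V)
    (x : Fin n → ℝ) (hxV : x ∈ V) (hx0 : x ≠ 0) :
    ∃ p, IsPrimitive V p ∧ Conforms p x := by
  obtain ⟨y, hyV, hyel, hyx⟩ := exists_elementary_conformal V x hxV hx0
  obtain ⟨p, hp, hpy⟩ := exists_primitive_of_elementary V hV y hyel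
  exact ⟨p, hp, conforms_trans hpy hyx⟩

lemma mem3 {a : ℝ} (h : a ∈ ({-1, 0, 1} : Set ℝ)) : a = -1 ∨ a = 0 ∨ a = 1 := by
  simpa using h

lemma decompZ (V : Submodule ℝ (Fin n → ℝ)) (hV : IsRegularSpace V) :
    ∀ N (z : Fin n → ℤ), (∑ j, (z j).natAbs) ≤ N → ((fun j => (z j : ℝ)) ∈ V) →
    ∃ (k : ℕ) (p : Fin k → Fin n → ℝ),
      (∀ i, IsPrimitive V (p i)) ∧ (∀ i, Conforms (p i) (fun j => (z j : ℝ))) ∧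
      (∑ i, p i) = (fun j => (z j : ℝ)) := by
  intro N
  induction N with
  | zero =>
    intro z hz _
    have hz0 : ∀ j, z j = 0 := by
      intro j
      have h1 : (z j).natAbs ≤ ∑ x, (z x).natAbs :=
        Finset.single_le_sum (f := fun x => (z x).natAbs)
          (fun x _ => Nat.zero_le _) (Finset.mem_univ j)
      omega
    refine ⟨0, fun _ => 0, fun i => i.elim0, fun i => i.elim0, ?_⟩
    funext j
    rw [Finset.sum_apply]
    simp [hz0 j]
  | succ N ih =>
    intro z hz hzV
    by_cases h0 : (fun j => (z j : ℝ)) = (0 : Fin n → ℝ)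
    · refine ⟨0, fun _ => 0, fun i => i.elim0, fun i => i.elim0, ?_⟩
      funext j
      have h := congrFun h0 j
      simp only [Pi.zero_apply] at h
      rw [Finset.sum_apply]
      simp [h]
    · obtain ⟨p, hp, hpx⟩ := exists_primitive_conformal V hV _ hzV h0
      classical
      set w : Fin n → ℤ := fun j => if p j = 1 then 1 else if p j = -1 then -1 else 0 with hw
      have hwp : ∀ j, ((w j : ℤ) : ℝ) = p j := by
        intro j
        rcases mem3 (hp.2 j) with h | h | h <;> norm_num [hw, h]
      set z' : Fin n → ℤ := fun j => z j - w j with hz'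
      have hz'a : ∀ j, z' j = z j - w j := fun j => rfl
      have hcoord : ∀ j, p j ≠ 0 → (z' j).natAbs + 1 = (z j).natAbs ∧ 0 ≤ z' j * z j := by
        intro j hpj
        have hconf : p j * (z j : ℝ) > 0 := hpx j hpj
        rcases mem3 (hp.2 j) with h | h | h
        · have hzj : (z j : ℝ) < 0 := by rw [h] at hconf; nlinarith
          have hzj' : z j < 0 := by exact_mod_cast hzj
          have hwj : w j = -1 := by norm_num [hw, h]
          rw [hz'a j, hwj]
          constructor
          · omega
          · nlinarith [hzj']
        · exact absurd h hpj
        · have hzj : (0:ℝ) < (z j : ℝ) := by rw [h] at hconf; nlinarith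
          have hzj' : 0 < z j := by exact_mod_cast hzj
          have hwj : w j = 1 := by norm_num [hw, h]
          rw [hz'a j, hwj]
          constructor
          · omega
          · nlinarith [hzj']
      have hz'j : ∀ j, p j = 0 → z' j = z j := by
        intro j hpj
        have hwj : w j = 0 := by norm_num [hw, hpj]
        rw [hz'a j, hwj, sub_zero]
      have hz'conf : Conforms (fun j => ((z' j : ℤ) : ℝ)) (fun j => ((z j : ℤ) : ℝ)) := by
        intro j hj
        replace hj : ((z' j : ℤ) : ℝ) ≠ 0 := hj
        show ((z' j : ℤ) : ℝ) * ((z j : ℤ) : ℝ) > 0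
        by_cases hpj : p j = 0
        · rw [hz'j j hpj] at hj ⊢
          have h1 : (z j : ℝ) ≠ 0 := hj
          exact mul_self_pos.mpr h1
        · have h2 := (hcoord j hpj).2
          have h1 : z' j ≠ 0 := fun hc => hj (by rw [hc]; simp)
          have hzj : z j ≠ 0 := by
            intro hc
            have h3 := (hcoord j hpj).1
            rw [hc] at h3
            simp at h3
          have h4 : 0 < z' j * z j :=
            lt_of_le_of_ne h2 (fun hc => (mul_ne_zero h1 hzj) hc.symm)
          exact_mod_cast h4
      obtain ⟨j1, hj1⟩ : ∃ j, p j ≠ 0 := by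
        by_contra hc
        push_neg at hc
        exact hp.1.2.1 (funext fun j => hc j)
      have hsumlt : ∑ j, (z' j).natAbs ≤ N := by
        have hle : ∀ j, (z' j).natAbs ≤ (z j).natAbs := by
          intro j
          by_cases hpj : p j = 0
          · rw [hz'j j hpj]
          · have := (hcoord j hpj).1; omega
        have hstrict : (z' j1).natAbs + 1 ≤ (z j1).natAbs := by
          have := (hcoord j1 hj1).1; omega
        have h1 : (∑ j, (z' j).natAbs) + 1 ≤ ∑ j, (z j).natAbs := by
          calc (∑ j, (z' j).natAbs) + 1
              = ∑ j, ((z' j).natAbs + if j = j1 then 1 else 0) := by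
                rw [Finset.sum_add_distrib]
                simp
            _ ≤ ∑ j, (z j).natAbs := by
                apply Finset.sum_le_sum
                intro j _
                by_cases hj : j = j1
                · subst hj; rw [if_pos rfl]; omega
                · rw [if_neg hj]; simpa using hle j
        omega
      have hz'V : (fun j => ((z' j : ℤ) : ℝ)) ∈ V := by
        have heq : (fun j => ((z' j : ℤ) : ℝ)) = (fun j => ((z j : ℤ) : ℝ)) - p := by
          funext j
          rw [hz'a j]
          push_cast
          rw [hwp j]
          simp
        rw [heq]
        exact V.sub_mem hzV hp.1.1
      obtain ⟨k, q, hq1, hq2, hq3⟩ := ih z' hsumlt hz'V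
      refine ⟨k + 1, Fin.cons p q, ?_, ?_, ?_⟩
      · intro i
        refine Fin.cases ?_ ?_ i
        · exact hp
        · intro i'; exact hq1 i'
      · intro i
        refine Fin.cases ?_ ?_ i
        · exact hpx
        · intro i'
          exact conforms_trans (hq2 i') hz'conf
      · rw [Fin.sum_cons, hq3]
        funext j
        simp only [Pi.add_apply, hz'a j]
        push_cast
        rw [hwp j]
        ring

lemma exists_conformal_decomp (V : Submodule ℝ (Fin n → ℝ)) (hV : IsRegularSpace V)
    (x : Fin n → ℝ) (hxV : x ∈ V) (hint : ∀ j, ∃ z : ℤ, x j = (z : ℝ)) :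
    ∃ (k : ℕ) (p : Fin k → Fin n → ℝ),
      (∀ i, IsPrimitive V (p i)) ∧ (∀ i, Conforms (p i) x) ∧ (∑ i, p i) = x := by
  choose z hz using hint
  have hx : x = fun j => (z j : ℝ) := funext hz
  rw [hx] at hxV ⊢
  exact decompZ V hV (∑ j, (z j).natAbs) z le_rfl hxV

lemma int3 {a : ℝ} (h : a = -1 ∨ a = 0 ∨ a = 1) : ∃ z : ℤ, a = (z : ℝ) := by
  rcases h with h | h | h
  exacts [⟨-1, by simp [h]⟩, ⟨0, by simp [h]⟩, ⟨1, by simp [h]⟩]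

lemma onorm_nonneg (x : Fin n → ℝ) : 0 ≤ onorm x :=
  Finset.sum_nonneg (fun j _ => abs_nonneg _)

lemma aug_slack {V : Submodule ℝ (Fin n → ℝ)} {c : Fin n → ℝ} {r : Fin n} {f P : Fin n → ℝ}
    (h : Augmenting V c r f P) :
    ∀ j, j ≠ r → (f j = c j → P j ≤ 0) ∧ (f j = 0 → 0 ≤ P j) := by
  obtain ⟨_, ε, hε, hfeas⟩ := h
  intro j hj
  obtain ⟨h1, h2⟩ := hfeas j hj
  simp only [Pi.add_apply, Pi.smul_apply, smul_eq_mul] at h1 h2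
  constructor
  · intro hc; nlinarith
  · intro hc; nlinarith

lemma aug_of_slack {V : Submodule ℝ (Fin n → ℝ)} {c : Fin n → ℝ} {r : Fin n} {f P : Fin n → ℝ}
    (hf : Feasible c r f) (hP : IsRPath V r P)
    (h : ∀ j, j ≠ r → (P j = 1 → f j < c j) ∧ (P j = -1 → 0 < f j)) :
    Augmenting V c r f P := by
  classical
  refine ⟨hP, ?_⟩
  set δ : Fin n → ℝ := fun j =>
    if j = r then 1 else if P j = 1 then c j - f j else if P j = -1 then f j else 1 with hδ
  have hδpos : ∀ j, 0 < δ j := by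
    intro j
    rw [hδ]
    dsimp only
    split
    · norm_num
    · rename_i hjr
      split
      · rename_i h1; linarith [(h j hjr).1 h1]
      · split
        · rename_i h2; exact (h j hjr).2 h2
        · norm_num
  have hne : (Finset.univ : Finset (Fin n)).Nonempty := ⟨r, Finset.mem_univ r⟩
  set ε := Finset.univ.inf' hne δ with hε
  have hεpos : 0 < ε := (Finset.lt_inf'_iff hne).mpr (fun j _ => hδpos j)
  refine ⟨ε, hεpos, ?_⟩
  intro j hjr
  have hεle : ε ≤ δ j := Finset.inf'_le _ (Finset.mem_univ j)
  have hδj : δ j = if P j = 1 then c j - f j else if P j = -1 then f j else 1 := by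
    rw [hδ]; dsimp only; rw [if_neg hjr]
  obtain ⟨hf1, hf2⟩ := hf j hjr
  show 0 ≤ (f + ε • P) j ∧ (f + ε • P) j ≤ c j
  simp only [Pi.add_apply, Pi.smul_apply, smul_eq_mul]
  rcases mem3 (hP.1.2 j) with h1 | h1 | h1
  · rw [h1]
    have hδf : δ j = f j := by rw [hδj, if_neg (by rw [h1]; norm_num), if_pos h1]
    constructor <;> nlinarith [hεle, hδf]
  · rw [h1]; constructor <;> nlinarith
  · rw [h1]
    have hδf : δ j = c j - f j := by rw [hδj, if_pos h1]
    constructor <;> nlinarith [hεle, hδf]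

theorem stmt12 (V : Submodule ℝ (Fin n → ℝ)) (hV : IsRegularSpace V)
    (r : Fin n) (c : Fin n → ℝ) (hc : ∀ j, j ≠ r → 0 ≤ c j)
    (f g P Q : Fin n → ℝ) (hfV : f ∈ V) (hf : Feasible c r f)
    (hP : ShortestAug V c r f P) (hg : MaxAug c r f P g)
    (hQ : ShortestAug V c r g Q) :
    onorm P < onorm Q ↔ ¬ ShortestAug V c r f Q := by
  classical
  obtain ⟨hPaug, hPmin⟩ := hP
  obtain ⟨hQaug, hQmin⟩ := hQ
  obtain ⟨hPpath, εP, hεP, hPfeas⟩ := hPaug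
  obtain ⟨hQpath, εQ, hεQ, hQfeas⟩ := hQaug
  obtain ⟨ε1, hε1, hgdef, hgfeas, _⟩ := hg
  have hPV : P ∈ V := hPpath.1.1.1
  have hQV : Q ∈ V := hQpath.1.1.1
  have hPr : P r = 1 := hPpath.2
  have hQr : Q r = 1 := hQpath.2
  have hPe : ∀ j, P j = -1 ∨ P j = 0 ∨ P j = 1 := fun j => mem3 (hPpath.1.2 j)
  have hQe : ∀ j, Q j = -1 ∨ Q j = 0 ∨ Q j = 1 := fun j => mem3 (hQpath.1.2 j)
  have hPs := aug_slack ⟨hPpath, εP, hεP, hPfeas⟩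
  have hQs := aug_slack (f := g) ⟨hQpath, εQ, hεQ, hQfeas⟩
  -- key pointwise facts
  have hkey1 : ∀ j, j ≠ r → 0 < P j + Q j → f j < c j := by
    intro j hj hpos
    rcases lt_or_eq_of_le (hf j hj).2 with h | hfc
    · exact h
    exfalso
    have hP0 : P j ≤ 0 := (hPs j hj).1 hfc
    rcases hPe j with h | h | h
    · rcases hQe j with h' | h' | h' <;> rw [h, h'] at hpos <;> norm_num at hpos
    · have hgj : g j = c j := by rw [hgdef]; simp [h, hfc]
      have hQ0 : Q j ≤ 0 := (hQs j hj).1 hgj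
      rw [h] at hpos; linarith
    · rw [h] at hP0; norm_num at hP0
  have hkey2 : ∀ j, j ≠ r → P j + Q j < 0 → 0 < f j := by
    intro j hj hneg
    rcases lt_or_eq_of_le (hf j hj).1 with h | hfc
    · exact h
    exfalso
    replace hfc : f j = 0 := hfc.symm
    have hP0 : 0 ≤ P j := (hPs j hj).2 hfc
    rcases hPe j with h | h | h
    · rw [h] at hP0; norm_num at hP0
    · have hgj : g j = 0 := by rw [hgdef]; simp [h, hfc]
      have hQ0 : 0 ≤ Q j := (hQs j hj).2 hgj
      rw [h] at hneg; linarith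
    · rcases hQe j with h' | h' | h' <;> rw [h, h'] at hneg <;> norm_num at hneg
  -- conformal decomposition of P + Q
  have hx : (P + Q) ∈ V := V.add_mem hPV hQV
  have hint : ∀ j, ∃ z : ℤ, (P + Q) j = (z : ℝ) := by
    intro j
    obtain ⟨za, hza⟩ := int3 (hPe j)
    obtain ⟨zb, hzb⟩ := int3 (hQe j)
    exact ⟨za + zb, by rw [Pi.add_apply, hza, hzb]; push_cast; ring⟩
  obtain ⟨k, p, hprim, hconf, hsum⟩ := exists_conformal_decomp V hV _ hx hint
  have hsumj : ∀ j, ∑ i, p i j = P j + Q j := by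
    intro j
    have := congrFun hsum j
    simpa [Finset.sum_apply] using this
  have hpr01 : ∀ i, p i r = 0 ∨ p i r = 1 := by
    intro i
    rcases mem3 ((hprim i).2 r) with h | h | h
    · exfalso
      have hc' := hconf i r (by rw [h]; norm_num)
      rw [h, Pi.add_apply, hPr, hQr] at hc'
      norm_num at hc'
    · exact Or.inl h
    · exact Or.inr h
  have hr2 : ∑ i, p i r = 2 := by
    rw [hsumj r, hPr, hQr]; norm_num
  set T : Finset (Fin k) := Finset.univ.filter (fun i => p i r = 1) with hT
  have hT2 : T.card = 2 := by
    have h1 : ∑ i ∈ T, p i r = (T.card : ℝ) := by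
      rw [Finset.sum_congr rfl (fun i hi => (Finset.mem_filter.mp hi).2)]
      simp
      rfl
    have h2 : ∑ i ∈ Finset.univ.filter (fun i => ¬ p i r = 1), p i r = 0 := by
      apply Finset.sum_eq_zero
      intro i hi
      rcases hpr01 i with h | h
      · exact h
      · exact absurd h (Finset.mem_filter.mp hi).2
    have h3 := Finset.sum_filter_add_sum_filter_not Finset.univ (fun i => p i r = 1)
      (fun i => p i r)
    rw [hr2] at h3
    rw [h1, h2, add_zero] at h3
    exact_mod_cast h3
  obtain ⟨a, haT, b, hbT, hab⟩ := Finset.one_lt_card.mp (by omega : 1 < T.card)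
  have hpar : p a r = 1 := (Finset.mem_filter.mp haT).2
  have hpbr : p b r = 1 := (Finset.mem_filter.mp hbT).2
  -- the two r-path summands are augmenting for f
  have haug : ∀ i, p i r = 1 → Augmenting V c r f (p i) := by
    intro i hir
    apply aug_of_slack hf ⟨hprim i, hir⟩
    intro j hj
    constructor
    · intro h1
      apply hkey1 j hj
      have hc' := hconf i j (by rw [h1]; norm_num)
      rw [h1, Pi.add_apply] at hc'
      linarith
    · intro h1
      apply hkey2 j hj
      have hc' := hconf i j (by rw [h1]; norm_num)
      rw [h1, Pi.add_apply] at hc'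
      nlinarith
  -- norm accounting
  have hperj : ∀ j, ∑ i, |p i j| = |P j + Q j| := by
    intro j
    rcases lt_trichotomy (P j + Q j) 0 with hlt | heq | hgt
    · have hle : ∀ i, p i j ≤ 0 := by
        intro i
        by_contra hc'
        push_neg at hc'
        have := hconf i j (ne_of_gt hc')
        rw [Pi.add_apply] at this
        nlinarith
      calc ∑ i, |p i j| = ∑ i, -(p i j) :=
            Finset.sum_congr rfl (fun i _ => abs_of_nonpos (hle i))
        _ = -(P j + Q j) := by rw [Finset.sum_neg_distrib, hsumj j]
        _ = |P j + Q j| := (abs_of_neg hlt).symm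
    · have hz : ∀ i, p i j = 0 := by
        intro i
        by_contra hc'
        have := hconf i j hc'
        rw [Pi.add_apply, heq, mul_zero] at this
        exact lt_irrefl 0 this
      rw [heq]
      simp [hz]
    · have hge : ∀ i, 0 ≤ p i j := by
        intro i
        by_contra hc'
        push_neg at hc'
        have := hconf i j (ne_of_lt hc')
        rw [Pi.add_apply] at this
        nlinarith
      calc ∑ i, |p i j| = ∑ i, p i j :=
            Finset.sum_congr rfl (fun i _ => abs_of_nonneg (hge i))
        _ = P j + Q j := hsumj j
        _ = |P j + Q j| := (abs_of_pos hgt).symm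
  have hnorm_split : ∑ i, onorm (p i) = onorm (P + Q) := by
    simp only [onorm]
    rw [Finset.sum_comm]
    exact Finset.sum_congr rfl (fun j _ => by rw [hperj j, Pi.add_apply])
  have hPa : onorm P ≤ onorm (p a) := hPmin _ (haug a hpar)
  have hPb : onorm P ≤ onorm (p b) := hPmin _ (haug b hpbr)
  have hpair : onorm (p a) + onorm (p b) ≤ ∑ i, onorm (p i) := by
    have h1 : ∑ i ∈ ({a, b} : Finset (Fin k)), onorm (p i) = onorm (p a) + onorm (p b) :=
      Finset.sum_pair hab
    rw [← h1]
    apply Finset.sum_le_sum_of_subset_of_nonneg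
    · intro i _
      exact Finset.mem_univ i
    · intro i _ _
      exact onorm_nonneg _
  have htri : onorm (P + Q) ≤ onorm P + onorm Q := by
    simp only [onorm]
    rw [← Finset.sum_add_distrib]
    apply Finset.sum_le_sum
    intro j _
    rw [Pi.add_apply]
    exact abs_add_le _ _
  have hmono : onorm P ≤ onorm Q := by linarith
  constructor
  · intro hlt hSQ
    have := hSQ.2 P ⟨hPpath, εP, hεP, hPfeas⟩
    linarith
  · intro hns
    by_contra hnlt
    apply hns
    have heqn : onorm Q = onorm P := le_antisymm (not_lt.mp hnlt) hmono
    have hlow : onorm P + onorm Q ≤ onorm (P + Q) := by linarith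
    have hcoordeq : ∀ j, |P j + Q j| = |P j| + |Q j| := by
      by_contra hc'
      push_neg at hc'
      obtain ⟨j, hj⟩ := hc'
      have hjlt : |P j + Q j| < |P j| + |Q j| := lt_of_le_of_ne (abs_add_le _ _) hj
      have : onorm (P + Q) < onorm P + onorm Q := by
        simp only [onorm]
        rw [← Finset.sum_add_distrib]
        apply Finset.sum_lt_sum (fun i _ => by rw [Pi.add_apply]; exact abs_add_le _ _)
          ⟨j, Finset.mem_univ j, by rw [Pi.add_apply]; exact hjlt⟩
      linarith
    have hQf : Augmenting V c r f Q := by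
      apply aug_of_slack hf hQpath
      intro j hj
      constructor
      · intro h1
        by_contra hfc'
        have hfc : f j = c j := le_antisymm (hf j hj).2 (not_lt.mp hfc')
        have hP0 : P j ≤ 0 := (hPs j hj).1 hfc
        rcases hPe j with h | h | h
        · have := hcoordeq j
          rw [h, h1] at this
          norm_num at this
        · have hgj : g j = c j := by rw [hgdef]; simp [h, hfc]
          have hQ0 : Q j ≤ 0 := (hQs j hj).1 hgj
          rw [h1] at hQ0
          linarith
        · rw [h] at hP0; norm_num at hP0
      · intro h1
        by_contra hfc'
        have hfc : f j = 0 := le_antisymm (not_lt.mp hfc') (hf j hj).1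
        have hP0 : 0 ≤ P j := (hPs j hj).2 hfc
        rcases hPe j with h | h | h
        · rw [h] at hP0; norm_num at hP0
        · have hgj : g j = 0 := by rw [hgdef]; simp [h, hfc]
          have hQ0 : 0 ≤ Q j := (hQs j hj).2 hgj
          rw [h1] at hQ0
          linarith
        · have := hcoordeq j
          rw [h, h1] at this
          norm_num at this
    refine ⟨hQf, ?_⟩
    intro R hR
    rw [heqn]
    exact hPmin R hR
end

section
/- A subspace V ⊆ ℝ^n is the row space of some totally unimodular matrix if and only if it is the kernel of some totally unimodular matrix. -/
open Finset

variable {n : ℕ}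

section TUaux

open Matrix Set Submodule Module

lemma mem_signRange_neg {a : ℝ} (ha : a ∈ Set.range SignType.cast) :
    -a ∈ Set.range SignType.cast := by
  obtain ⟨s, rfl⟩ := ha
  exact ⟨-s, by cases s <;> simp⟩

lemma tu_neg {m₀ n₀ : Type*} {A : Matrix m₀ n₀ ℝ} (hA : A.IsTotallyUnimodular) :
    (-A).IsTotallyUnimodular := by
  rw [Matrix.isTotallyUnimodular_iff] at hA ⊢
  intro k f g
  have h : (-A).submatrix f g = (-1 : ℝ) • (A.submatrix f g) := by
    ext i j; simp
  rw [h, Matrix.det_smul, Fintype.card_fin]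
  rcases neg_one_pow_eq_or ℝ k with h1 | h1 <;> rw [h1]
  · simpa using hA k f g
  · simpa using mem_signRange_neg (hA k f g)

/-- The linear functional `v ↦ v ⬝ᵥ x`. -/
def dotL (x : Fin n → ℝ) : (Fin n → ℝ) →ₗ[ℝ] ℝ where
  toFun v := v ⬝ᵥ x
  map_add' a b := add_dotProduct a b x
  map_smul' c a := by simp [smul_dotProduct]

lemma mulVec_eq_zero_iff_span {m₀ : Type*} [Fintype m₀] (A : Matrix m₀ (Fin n) ℝ)
    (x : Fin n → ℝ) :
    A *ᵥ x = 0 ↔ Submodule.span ℝ (Set.range A) ≤ LinearMap.ker (dotL x) := by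
  rw [Submodule.span_le]
  constructor
  · rintro h v ⟨i, rfl⟩
    simpa [dotL, Matrix.mulVec_apply, Matrix.row_apply'] using congr_fun h i
  · intro h
    ext i
    simpa [dotL, Matrix.mulVec_apply, Matrix.row_apply'] using h (Set.mem_range_self i)

lemma ker_eq_of_span_eq {m₁ m₂ : Type*} [Fintype m₁] [Fintype m₂]
    {A : Matrix m₁ (Fin n) ℝ} {B : Matrix m₂ (Fin n) ℝ}
    (h : Submodule.span ℝ (Set.range A) = Submodule.span ℝ (Set.range B)) :
    LinearMap.ker A.mulVecLin = LinearMap.ker B.mulVecLin := by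
  ext x
  simp only [LinearMap.mem_ker, Matrix.mulVecLin_apply]
  rw [mulVec_eq_zero_iff_span, mulVec_eq_zero_iff_span, h]

lemma key {m : ℕ} (A : Matrix (Fin m) (Fin n) ℝ) (hA : A.IsTotallyUnimodular) :
    ∃ (m' : ℕ) (C : Matrix (Fin m') (Fin n) ℝ), C.IsTotallyUnimodular ∧
      Submodule.span ℝ (Set.range A) = LinearMap.ker C.mulVecLin ∧
      LinearMap.ker A.mulVecLin = Submodule.span ℝ (Set.range C) := by
  classical
  obtain ⟨t, hts, hspan, hli⟩ := exists_linearIndependent ℝ (Set.range A)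
  haveI : Fintype t := hli.setFinite.fintype
  have hchoose : ∀ x : t, ∃ i : Fin m, A i = (x : Fin n → ℝ) := fun x => hts x.2
  set R : t → Fin m := fun x => (hchoose x).choose with hR
  set A' : Matrix t (Fin n) ℝ := A.submatrix R id with hA'def
  have hA'row : ∀ x : t, A' x = (x : Fin n → ℝ) := fun x => (hchoose x).choose_spec
  have hA'TU : A'.IsTotallyUnimodular := hA.submatrix R id
  have hrangeA' : Set.range A' = t := by
    ext v
    constructor
    · rintro ⟨x, rfl⟩; rw [hA'row]; exact x.2
    · intro hv; exact ⟨⟨v, hv⟩, hA'row _⟩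
  have hspanA' : Submodule.span ℝ (Set.range A') = Submodule.span ℝ (Set.range A) := by
    rw [hrangeA', hspan]
  have hliA' : LinearIndependent ℝ A' := by
    have h : A' = fun x : t => (x : Fin n → ℝ) := funext hA'row
    rw [h]; exact hli
  -- the columns of `A'` span everything
  have hcolspan : Submodule.span ℝ (Set.range A'ᵀ) = ⊤ := by
    rw [show Set.range A'ᵀ = Set.range A'.col from rfl, ← Matrix.range_mulVecLin]
    apply Submodule.eq_top_of_finrank_eq
    rw [Module.finrank_pi]
    exact hliA'.rank_matrix
  obtain ⟨b, hbsub, hbspan, hbli⟩ := exists_linearIndependent ℝ (Set.range A'ᵀ)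
  rw [hcolspan] at hbspan
  haveI : Fintype b := hbli.setFinite.fintype
  let bas : Basis b ℝ (t → ℝ) := Basis.mk hbli (by rw [Subtype.range_coe, hbspan])
  have hcard : Fintype.card b = Fintype.card t := by
    have h := Module.finrank_eq_card_basis bas
    rw [Module.finrank_pi] at h
    omega
  let ε : b ≃ t := Fintype.equivOfCardEq hcard
  have hcho : ∀ y : b, ∃ j : Fin n, A'ᵀ j = (y : t → ℝ) := fun y => hbsub y.2
  set J : t → Fin n := fun i => (hcho (ε.symm i)).choose with hJdef
  have hJcol : ∀ i : t, A'ᵀ (J i) = ((ε.symm i : b) : t → ℝ) :=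
    fun i => (hcho (ε.symm i)).choose_spec
  set M : Matrix t t ℝ := A'.submatrix id J with hMdef
  have hMcol : ∀ i : t, Mᵀ i = ((ε.symm i : b) : t → ℝ) := by
    intro i
    ext i'
    exact congr_fun (hJcol i) i'
  have hMunit : IsUnit M := by
    rw [← Matrix.mulVec_injective_iff_isUnit, Matrix.mulVec_injective_iff]
    have h : (fun i => Mᵀ i) = (fun y : b => (y : t → ℝ)) ∘ (fun i : t => ε.symm i) :=
      funext hMcol
    rw [show M.col = fun i => Mᵀ i from rfl, h]
    exact hbli.comp _ ε.symm.injective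
  have hMdetUnit : IsUnit M.det := (Matrix.isUnit_iff_isUnit_det M).mp hMunit
  have hMdet : M.det = 1 ∨ M.det = -1 := by
    have hmem : M.det ∈ Set.range SignType.cast :=
      (Matrix.isTotallyUnimodular_iff_fintype.{0} A').mp hA'TU t id J
    obtain ⟨s, hs⟩ := hmem
    cases s with
    | zero => rw [← hs] at hMdetUnit; simp at hMdetUnit
    | pos => left; rw [← hs]; simp
    | neg => right; rw [← hs]; simp
  set B : Matrix t (Fin n) ℝ := M⁻¹ * A' with hBdef
  have hMM : M⁻¹ * M = 1 := Matrix.nonsing_inv_mul M hMdetUnit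
  have hBJ : ∀ i i' : t, B i (J i') = (1 : Matrix t t ℝ) i i' := by
    intro i i'
    have h : B i (J i') = (M⁻¹ * M) i i' := by
      simp only [hBdef, Matrix.mul_apply, hMdef, Matrix.submatrix_apply, id]
    rw [h, hMM]
  have hJinj : Function.Injective J := by
    intro i i' h
    have h1 := hJcol i
    rw [h, hJcol i'] at h1
    have h2 : (ε.symm i' : b) = ε.symm i := Subtype.ext h1
    have := ε.symm.injective h2
    exact this.symm
  -- total unimodularity of B
  have hBTU : B.IsTotallyUnimodular := by
    intro k f g hf hg
    let κ' := {i : t // i ∉ Set.range f}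
    let e : (Fin k ⊕ κ') ≃ t :=
      ((Equiv.ofInjective f hf).sumCongr (Equiv.refl κ')).trans
        (Equiv.sumCompl (· ∈ Set.range f))
    have he1 : ∀ a, e (Sum.inl a) = f a := fun a => rfl
    have he2 : ∀ a : κ', e (Sum.inr a) = a.val := fun a => rfl
    let γ : (Fin k ⊕ κ') → Fin n := Sum.elim g (fun a => J a.val)
    have hdet1 : (B.submatrix e γ).det = (B.submatrix f g).det := by
      have hb : B.submatrix e γ =
          Matrix.fromBlocks (B.submatrix f g) 0
            (B.submatrix (fun a : κ' => a.val) g) 1 := by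
        ext c c'
        cases c with
        | inl a =>
          cases c' with
          | inl a' => simp [γ, he1]
          | inr a' =>
            have h0 := hBJ (f a) a'.val
            have hne : f a ≠ a'.val := by
              intro hcon
              exact a'.2 ⟨a, hcon⟩
            simp only [Matrix.submatrix_apply, he1, γ, Sum.elim_inr] at *
            rw [h0, Matrix.one_apply_ne hne]
            simp
        | inr a =>
          cases c' with
          | inl a' => simp [γ, he2]
          | inr a' =>
            have h0 := hBJ a.val a'.val
            simp only [Matrix.submatrix_apply, he2, γ, Sum.elim_inr] at *
            rw [h0]
            by_cases hac : a = a'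
            · subst hac; simp [Matrix.one_apply]
            · rw [Matrix.one_apply_ne (fun hcon => hac (Subtype.ext hcon))]
              simp [Matrix.one_apply_ne' , hac]
      rw [hb, Matrix.det_fromBlocks_zero₁₂, Matrix.det_one, mul_one]
    have hdet2 : (B.submatrix e γ).det = (B.submatrix id (γ ∘ e.symm)).det := by
      have h : B.submatrix e γ = (B.submatrix id (γ ∘ e.symm)).submatrix e e := by
        ext c c'
        simp [Matrix.submatrix_apply, Function.comp, Equiv.symm_apply_apply]
      rw [h, Matrix.det_submatrix_equiv_self]
    have hfact : B.submatrix id (γ ∘ e.symm) = M⁻¹ * (A'.submatrix id (γ ∘ e.symm)) := by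
      ext i j
      simp [hBdef, Matrix.mul_apply, Matrix.submatrix_apply]
    have hsubTU : (A'.submatrix id (γ ∘ e.symm)).det ∈ Set.range SignType.cast := by
      have h : A'.submatrix id (γ ∘ e.symm) = A.submatrix R (γ ∘ e.symm) := by
        ext i j
        simp [hA'def, Matrix.submatrix_apply]
      rw [h]
      exact (Matrix.isTotallyUnimodular_iff_fintype.{0} A).mp hA t R (γ ∘ e.symm)
    have hinvdet : M⁻¹.det = M.det := by
      rcases hMdet with h | h <;> rw [Matrix.det_nonsing_inv, h] <;> norm_num
    rw [← hdet1, hdet2, hfact, Matrix.det_mul, hinvdet]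
    rcases hMdet with h | h <;> rw [h]
    · simpa using hsubTU
    · simpa using mem_signRange_neg hsubTU
  -- row space of B equals row space of A
  have hspanB : Submodule.span ℝ (Set.range B) = Submodule.span ℝ (Set.range A) := by
    rw [← hspanA', show Set.range B = Set.range B.row from rfl,
      show Set.range A' = Set.range A'.row from rfl, ← range_vecMulLinear, ← range_vecMulLinear]
    apply le_antisymm
    · rintro x ⟨y, rfl⟩
      exact ⟨y ᵥ* M⁻¹, by simp [hBdef, Matrix.vecMul_vecMul]⟩
    · rintro x ⟨y, rfl⟩
      refine ⟨y ᵥ* M, ?_⟩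
      simp only [Matrix.vecMulLinear_apply, hBdef, Matrix.vecMul_vecMul,
        ← Matrix.mul_assoc, Matrix.mul_nonsing_inv M hMdetUnit, Matrix.one_mul]
  -- complement of the columns J
  let κ := {j : Fin n // j ∉ Set.range J}
  let eJ : (t ⊕ κ) ≃ Fin n :=
    ((Equiv.ofInjective J hJinj).sumCongr (Equiv.refl κ)).trans
      (Equiv.sumCompl (· ∈ Set.range J))
  have heJ1 : ∀ i, eJ (Sum.inl i) = J i := fun i => rfl
  have heJ2 : ∀ kk : κ, eJ (Sum.inr kk) = kk.val := fun kk => rfl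
  have hsumJ : ∀ F : Fin n → ℝ, ∑ j, F j = (∑ i : t, F (J i)) + ∑ kk : κ, F kk.val := by
    intro F
    rw [← Fintype.sum_equiv eJ (fun c => F (eJ c)) F (fun c => rfl), Fintype.sum_sum_type]
    simp only [heJ1, heJ2]
  set D : Matrix t κ ℝ := B.submatrix id (fun kk : κ => kk.val) with hDdef
  set C₀ : Matrix κ (Fin n) ℝ := (Matrix.fromCols (-Dᵀ) 1).submatrix id eJ.symm
    with hC₀def
  have hC₀J : ∀ (kk : κ) (i : t), C₀ kk (J i) = - B i kk.val := by
    intro kk i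
    have h1 : eJ.symm (J i) = Sum.inl i := by
      rw [Equiv.symm_apply_eq]; exact (heJ1 i).symm
    simp [hC₀def, h1, Matrix.fromCols, hDdef]
  have hC₀k : ∀ kk kk' : κ, C₀ kk (kk'.val) = (1 : Matrix κ κ ℝ) kk kk' := by
    intro kk kk'
    have h1 : eJ.symm kk'.val = Sum.inr kk' := by
      rw [Equiv.symm_apply_eq]; exact (heJ2 kk').symm
    simp [hC₀def, h1, Matrix.fromCols]
  have hC₀TU : C₀.IsTotallyUnimodular := by
    apply Matrix.IsTotallyUnimodular.submatrix
    apply Matrix.IsTotallyUnimodular.fromCols_one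
    exact tu_neg (hBTU.submatrix id (fun kk : κ => kk.val)).transpose
  -- first space identity
  have h1 : Submodule.span ℝ (Set.range A) = LinearMap.ker C₀.mulVecLin := by
    rw [← hspanB]
    apply le_antisymm
    · rw [Submodule.span_le]
      rintro v ⟨i, rfl⟩
      simp only [SetLike.mem_coe, LinearMap.mem_ker, Matrix.mulVecLin_apply]
      ext kk
      have hcomp : (C₀ *ᵥ B i) kk = ∑ j, C₀ kk j * B i j := rfl
      rw [hcomp] at *
      show (∑ j, C₀ kk j * B i j) = 0
      rw [hsumJ (fun j => C₀ kk j * B i j)]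
      have e1 : ∑ i' : t, C₀ kk (J i') * B i (J i') = - B i kk.val := by
        have : ∀ i' : t, C₀ kk (J i') * B i (J i')
            = (if i = i' then C₀ kk (J i') else 0) := by
          intro i'
          rw [hBJ i i', Matrix.one_apply]
          by_cases hii : i = i' <;> simp [hii]
        simp_rw [this]
        rw [Finset.sum_ite_eq Finset.univ i (fun i' => C₀ kk (J i'))]
        simp [hC₀J kk i]
      have e2 : ∑ kk' : κ, C₀ kk (kk'.val) * B i kk'.val = B i kk.val := by
        have : ∀ kk' : κ, C₀ kk (kk'.val) * B i kk'.val
            = (if kk = kk' then B i kk'.val else 0) := by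
          intro kk'
          rw [hC₀k kk kk', Matrix.one_apply]
          by_cases hkk : kk = kk' <;> simp [hkk]
        simp_rw [this]
        rw [Finset.sum_ite_eq Finset.univ kk (fun kk' : κ => B i kk'.val)]
        simp
      rw [e1, e2]
      ring
    · intro x hx
      simp only [LinearMap.mem_ker, Matrix.mulVecLin_apply] at hx
      rw [show Set.range B = Set.range B.row from rfl, ← range_vecMulLinear]
      refine ⟨fun i => x (J i), ?_⟩
      ext j
      obtain ⟨c, rfl⟩ := eJ.surjective j
      have hvm : ∀ j', ((fun i => x (J i)) ᵥ* B) j' = ∑ i' : t, x (J i') * B i' j' := by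
        intro j'; rfl
      cases c with
      | inl i =>
        rw [heJ1]
        show ((fun i => x (J i)) ᵥ* B) (J i) = x (J i)
        rw [hvm]
        have : ∀ i' : t, x (J i') * B i' (J i) = (if i' = i then x (J i') else 0) := by
          intro i'
          rw [hBJ i' i, Matrix.one_apply]
          by_cases hii : i' = i <;> simp [hii]
        simp_rw [this]
        rw [Finset.sum_ite_eq' Finset.univ i (fun i' : t => x (J i'))]
        simp
      | inr kk =>
        rw [heJ2]
        show ((fun i => x (J i)) ᵥ* B) kk.val = x kk.val
        rw [hvm]
        have hx0 : (∑ j, C₀ kk j * x j) = 0 := congr_fun hx kk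
        rw [hsumJ (fun j => C₀ kk j * x j)] at hx0
        have e2 : ∑ kk' : κ, C₀ kk (kk'.val) * x kk'.val = x kk.val := by
          have : ∀ kk' : κ, C₀ kk (kk'.val) * x kk'.val
              = (if kk = kk' then x kk'.val else 0) := by
            intro kk'
            rw [hC₀k kk kk', Matrix.one_apply]
            by_cases hkk : kk = kk' <;> simp [hkk]
          simp_rw [this]
          rw [Finset.sum_ite_eq Finset.univ kk (fun kk' : κ => x kk'.val)]
          simp
        rw [e2] at hx0
        have e1 : ∑ i' : t, C₀ kk (J i') * x (J i') = - ∑ i' : t, x (J i') * B i' kk.val := by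
          rw [← Finset.sum_neg_distrib]
          apply Finset.sum_congr rfl
          intro i' _
          rw [hC₀J kk i']
          ring
        rw [e1] at hx0
        linarith
  -- second space identity
  have h2 : LinearMap.ker A.mulVecLin = Submodule.span ℝ (Set.range C₀) := by
    have hkerAB : LinearMap.ker A.mulVecLin = LinearMap.ker B.mulVecLin :=
      ker_eq_of_span_eq hspanB.symm
    rw [hkerAB]
    apply le_antisymm
    · intro x hx
      simp only [LinearMap.mem_ker, Matrix.mulVecLin_apply] at hx
      rw [show Set.range C₀ = Set.range C₀.row from rfl, ← range_vecMulLinear]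
      refine ⟨fun kk : κ => x kk.val, ?_⟩
      ext j
      obtain ⟨c, rfl⟩ := eJ.surjective j
      have hvm : ∀ j', ((fun kk : κ => x kk.val) ᵥ* C₀) j'
          = ∑ kk' : κ, x kk'.val * C₀ kk' j' := by
        intro j'; rfl
      cases c with
      | inl i =>
        rw [heJ1]
        show ((fun kk : κ => x kk.val) ᵥ* C₀) (J i) = x (J i)
        rw [hvm]
        have hx0 : (∑ j, B i j * x j) = 0 := congr_fun hx i
        rw [hsumJ (fun j => B i j * x j)] at hx0
        have e1 : ∑ i' : t, B i (J i') * x (J i') = x (J i) := by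
          have : ∀ i' : t, B i (J i') * x (J i') = (if i = i' then x (J i') else 0) := by
            intro i'
            rw [hBJ i i', Matrix.one_apply]
            by_cases hii : i = i' <;> simp [hii]
          simp_rw [this]
          rw [Finset.sum_ite_eq Finset.univ i (fun i' : t => x (J i'))]
          simp
        rw [e1] at hx0
        have e2 : ∑ kk' : κ, x kk'.val * C₀ kk' (J i)
            = - ∑ kk' : κ, B i kk'.val * x kk'.val := by
          rw [← Finset.sum_neg_distrib]
          apply Finset.sum_congr rfl
          intro kk' _
          rw [hC₀J kk' i]
          ring
        rw [e2]
        linarith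
      | inr kk =>
        rw [heJ2]
        show ((fun kk : κ => x kk.val) ᵥ* C₀) kk.val = x kk.val
        rw [hvm]
        have : ∀ kk' : κ, x kk'.val * C₀ kk' kk.val
            = (if kk' = kk then x kk'.val else 0) := by
          intro kk'
          rw [hC₀k kk' kk, Matrix.one_apply]
          by_cases hkk : kk' = kk <;> simp [hkk]
        simp_rw [this]
        rw [Finset.sum_ite_eq' Finset.univ kk (fun kk' : κ => x kk'.val)]
        simp
    · rw [Submodule.span_le]
      rintro v ⟨kk, rfl⟩
      simp only [SetLike.mem_coe, LinearMap.mem_ker, Matrix.mulVecLin_apply]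
      ext i
      show (∑ j, B i j * C₀ kk j) = 0
      rw [hsumJ (fun j => B i j * C₀ kk j)]
      have e1 : ∑ i' : t, B i (J i') * C₀ kk (J i') = - B i kk.val := by
        have : ∀ i' : t, B i (J i') * C₀ kk (J i')
            = (if i = i' then C₀ kk (J i') else 0) := by
          intro i'
          rw [hBJ i i', Matrix.one_apply]
          by_cases hii : i = i' <;> simp [hii]
        simp_rw [this]
        rw [Finset.sum_ite_eq Finset.univ i (fun i' : t => C₀ kk (J i'))]
        simp [hC₀J kk i]
      have e2 : ∑ kk' : κ, B i kk'.val * C₀ kk kk'.val = B i kk.val := by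
        have : ∀ kk' : κ, B i kk'.val * C₀ kk kk'.val
            = (if kk = kk' then B i kk'.val else 0) := by
          intro kk'
          rw [hC₀k kk kk', Matrix.one_apply]
          by_cases hkk : kk = kk' <;> simp [hkk]
        simp_rw [this]
        rw [Finset.sum_ite_eq Finset.univ kk (fun kk' : κ => B i kk'.val)]
        simp
      rw [e1, e2]
      ring
  -- reindex the rows of C₀ by Fin
  let eκ := Fintype.equivFin κ
  have hrange : Set.range (C₀.submatrix eκ.symm id) = Set.range C₀ := by
    have h : C₀.submatrix eκ.symm id = C₀ ∘ eκ.symm := rfl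
    rw [h]
    exact eκ.symm.surjective.range_comp C₀
  have hspanC : Submodule.span ℝ (Set.range C₀)
      = Submodule.span ℝ (Set.range (C₀.submatrix eκ.symm id)) := by
    rw [hrange]
  refine ⟨Fintype.card κ, C₀.submatrix eκ.symm id, hC₀TU.submatrix _ _, ?_, ?_⟩
  · rw [h1]
    exact ker_eq_of_span_eq hspanC
  · rw [h2, hspanC]

end TUaux

theorem stmt17 (V : Submodule ℝ (Fin n → ℝ)) :
    (∃ (m : ℕ) (A : Matrix (Fin m) (Fin n) ℝ),
        A.IsTotallyUnimodular ∧ V = Submodule.span ℝ (Set.range A)) ↔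
      IsRegularSpace V := by
  constructor
  · rintro ⟨m, A, hA, rfl⟩
    obtain ⟨m', C, hC, hC1, hC2⟩ := key A hA
    exact ⟨m', C, hC, hC1⟩
  · rintro ⟨m, A, hA, rfl⟩
    obtain ⟨m', C, hC, hC1, hC2⟩ := key A hA
    exact ⟨m', C, hC, hC2⟩
end
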